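/- (Backlog bound via mgf for a single stationary node with independence) If the arrival process A and service process S at a single node are independent, stationary, with D(t) ≥ (A ⊗ S)(t) pathwise, then P(A(t) - D(t) > x) ≤ [Σ_{u=0}^{t} exp(θu(α(θ,u) - β(θ,u)))] e^{-θx} for any θ > 0, i.e., the Cauchy-Schwarz loss factor of 2 in the exponent is avoided. -/

import Mathlib

open MeasureTheory ProbabilityTheory

/-- Single-node backlog bound with independence: if the arrival process `A`
and the service process `S` at a single node are independent and stationary,
with `D(t) ≥ (A ⊗ S)(t)` pathwise, then for any `θ > 0` and `x ≥ 0`,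
`P(A(t) - D(t) > x) ≤ [Σ_{u=0}^t e^{θu(α(θ,u) - β(θ,u))}] e^{-θx}`,
avoiding the Cauchy–Schwarz loss factor of 2 in the exponent. -/
theorem single_node_backlog_bound_indep {Ω : Type*} [MeasurableSpace Ω]
    (μ : Measure Ω) [IsProbabilityMeasure μ]
    (A : ℕ → Ω → ℝ) (S : ℕ → ℕ → Ω → ℝ) (D : ℕ → Ω → ℝ)
    (hAmeas : ∀ u, Measurable (A u)) (hSmeas : ∀ s t, Measurable (S s t))
    (hDmeas : ∀ t, Measurable (D t))
    -- independence of the arrival process and the service process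
    (hindep : ProbabilityTheory.Indep
      (MeasurableSpace.comap (fun ω => fun u : ℕ => A u ω) inferInstance)
      (MeasurableSpace.comap (fun ω => fun p : ℕ × ℕ => S p.1 p.2 ω) inferInstance) μ)
    -- stationarity
    (hAstat : ∀ s t : ℕ, s ≤ t →
      IdentDistrib (fun ω => A t ω - A s ω) (A (t - s)) μ μ)
    (hSstat : ∀ s t : ℕ, s ≤ t → IdentDistrib (S s t) (S 0 (t - s)) μ μ)
    -- dynamic server property
    (hD : ∀ ω, ∀ t : ℕ, (⨅ s : Fin (t + 1), (A s ω + S s t ω)) ≤ D t ω)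
    (hintA : ∀ (θ : ℝ) (u : ℕ), Integrable (fun ω => Real.exp (θ * A u ω)) μ)
    (hintS : ∀ (θ : ℝ) (s t : ℕ), Integrable (fun ω => Real.exp (θ * S s t ω)) μ)
    (α β : ℝ → ℕ → ℝ)
    (hα : ∀ θ > (0 : ℝ), ∀ u : ℕ,
      Real.exp (θ * u * α θ u) = ∫ ω, Real.exp (θ * A u ω) ∂μ)
    (hβ : ∀ θ > (0 : ℝ), ∀ u : ℕ,
      Real.exp (-(θ * u * β θ u)) = ∫ ω, Real.exp (-θ * S 0 u ω) ∂μ)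
    (t : ℕ) (θ x : ℝ) (hθ : 0 < θ) (hx : 0 ≤ x) :
    μ {ω | x < A t ω - D t ω} ≤
      ENNReal.ofReal
        ((∑ u ∈ Finset.range (t + 1),
            Real.exp (θ * u * (α θ u - β θ u))) * Real.exp (-θ * x)) := by
  have hexpθ : Measurable fun y : ℝ => Real.exp (θ * y) :=
    Real.measurable_exp.comp (measurable_const.mul measurable_id)
  have hexpmθ : Measurable fun y : ℝ => Real.exp (-θ * y) :=
    Real.measurable_exp.comp (measurable_const.mul measurable_id)
  set g : ℕ → ℝ := fun u => Real.exp (θ * u * (α θ u - β θ u)) with hg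
  -- Step 1: pathwise inclusion into a finite union
  have hsub : {ω | x < A t ω - D t ω} ⊆
      ⋃ s : Fin (t + 1), {ω | x < A t ω - A (s : ℕ) ω - S (s : ℕ) t ω} := by
    intro ω hω
    have hω' : x < A t ω - D t ω := hω
    have h1 : (⨅ s : Fin (t + 1), (A (s : ℕ) ω + S (s : ℕ) t ω)) < A t ω - x := by
      have h2 := hD ω t
      linarith
    obtain ⟨s, hs⟩ := exists_lt_of_ciInf_lt h1
    exact Set.mem_iUnion.2 ⟨s, by simp only [Set.mem_setOf_eq]; linarith⟩
  -- Step 2: Chernoff bound for each term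
  have key : ∀ s : Fin (t + 1),
      μ {ω | x < A t ω - A (s : ℕ) ω - S (s : ℕ) t ω} ≤
        ENNReal.ofReal (g (t - (s : ℕ)) * Real.exp (-θ * x)) := by
    intro s
    have hst : (s : ℕ) ≤ t := Nat.lt_succ_iff.mp s.isLt
    set u := t - (s : ℕ) with hu
    set X : Ω → ℝ := fun ω => A t ω - A (s : ℕ) ω with hX
    set Y : Ω → ℝ := S (s : ℕ) t with hY
    -- independence of X and Y
    have hmA : Measurable[MeasurableSpace.comap (fun ω => fun u : ℕ => A u ω) inferInstance] X := by
      have hXeq : X = (fun f : ℕ → ℝ => f t - f (s : ℕ)) ∘ (fun ω => fun u : ℕ => A u ω) := rfl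
      rw [hXeq]
      exact ((measurable_pi_apply t).sub (measurable_pi_apply (s : ℕ))).comp
        (Measurable.of_comap_le le_rfl)
    have hmS : Measurable[MeasurableSpace.comap
        (fun ω => fun p : ℕ × ℕ => S p.1 p.2 ω) inferInstance] Y := by
      have hYeq : Y = (fun f : ℕ × ℕ → ℝ => f ((s : ℕ), t)) ∘
          (fun ω => fun p : ℕ × ℕ => S p.1 p.2 ω) := rfl
      rw [hYeq]
      exact (measurable_pi_apply _).comp (Measurable.of_comap_le le_rfl)
    have hXY : IndepFun X Y μ := by
      rw [IndepFun_iff_Indep]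
      exact indep_of_indep_of_le_right
        (indep_of_indep_of_le_left hindep ((measurable_iff_comap_le).mp hmA))
        ((measurable_iff_comap_le).mp hmS)
    have hXYexp : IndepFun (fun ω => Real.exp (θ * X ω)) (fun ω => Real.exp (-θ * Y ω)) μ :=
      hXY.comp hexpθ hexpmθ
    -- identical distributions
    have hidX : IdentDistrib (fun ω => Real.exp (θ * X ω)) (fun ω => Real.exp (θ * A u ω)) μ μ :=
      (hAstat (s : ℕ) t hst).comp hexpθ
    have hidY : IdentDistrib (fun ω => Real.exp (-θ * Y ω))
        (fun ω => Real.exp (-θ * S 0 u ω)) μ μ :=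
      (hSstat (s : ℕ) t hst).comp hexpmθ
    have hintX : Integrable (fun ω => Real.exp (θ * X ω)) μ :=
      hidX.integrable_iff.mpr (hintA θ u)
    have hintY : Integrable (fun ω => Real.exp (-θ * Y ω)) μ :=
      hidY.integrable_iff.mpr (hintS (-θ) 0 u)
    -- the exponential of the difference
    have hfun : (fun ω => Real.exp (θ * (X ω - Y ω))) =
        fun ω => Real.exp (θ * X ω) * Real.exp (-θ * Y ω) := by
      funext ω; rw [← Real.exp_add]; ring_nf
    have hgint : Integrable (fun ω => Real.exp (θ * (X ω - Y ω))) μ := by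
      rw [hfun]
      exact hXYexp.integrable_mul hintX hintY
    -- the value of the mgf
    have hval : ∫ ω, Real.exp (θ * (X ω - Y ω)) ∂μ = g u := by
      rw [hfun]
      have hmul : ∫ ω, Real.exp (θ * X ω) * Real.exp (-θ * Y ω) ∂μ =
          (∫ ω, Real.exp (θ * X ω) ∂μ) * ∫ ω, Real.exp (-θ * Y ω) ∂μ :=
        hXYexp.integral_fun_mul_eq_mul_integral hintX.aestronglyMeasurable hintY.aestronglyMeasurable
      rw [hmul, hidX.integral_eq, hidY.integral_eq, ← hα θ hθ u, ← hβ θ hθ u, ← Real.exp_add,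
        hg]
      congr 1
      ring
    -- Markov / Chernoff
    have hsub2 : {ω | x < A t ω - A (s : ℕ) ω - S (s : ℕ) t ω} ⊆
        {ω | Real.exp (θ * x) ≤ Real.exp (θ * (X ω - Y ω))} := by
      intro ω hω
      have hω' : x < X ω - Y ω := by
        simp only [Set.mem_setOf_eq] at hω; simp only [hX, hY]; linarith
      exact Real.exp_le_exp.mpr (le_of_lt (mul_lt_mul_of_pos_left hω' hθ))
    have hmark := mul_meas_ge_le_integral_of_nonneg
      (ae_of_all μ fun ω => (Real.exp_pos (θ * (X ω - Y ω))).le) hgint (Real.exp (θ * x))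
    have hE : (0:ℝ) < Real.exp (θ * x) := Real.exp_pos _
    have htoReal : (μ {ω | Real.exp (θ * x) ≤ Real.exp (θ * (X ω - Y ω))}).toReal ≤
        g u * Real.exp (-θ * x) := by
      rw [show -θ * x = -(θ * x) by ring, Real.exp_neg, ← div_eq_mul_inv, ← hval]
      rw [le_div_iff₀ hE]
      calc (μ {ω | Real.exp (θ * x) ≤ Real.exp (θ * (X ω - Y ω))}).toReal * Real.exp (θ * x)
          = Real.exp (θ * x) * (μ {ω | Real.exp (θ * x) ≤ Real.exp (θ * (X ω - Y ω))}).toReal := by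
            ring
        _ ≤ _ := hmark
    calc μ {ω | x < A t ω - A (s : ℕ) ω - S (s : ℕ) t ω}
        ≤ μ {ω | Real.exp (θ * x) ≤ Real.exp (θ * (X ω - Y ω))} := measure_mono hsub2
      _ = ENNReal.ofReal ((μ {ω | Real.exp (θ * x) ≤ Real.exp (θ * (X ω - Y ω))}).toReal) :=
          (ENNReal.ofReal_toReal (measure_ne_top μ _)).symm
      _ ≤ ENNReal.ofReal (g u * Real.exp (-θ * x)) := ENNReal.ofReal_le_ofReal htoReal
  -- Step 3: combine
  calc μ {ω | x < A t ω - D t ω}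
      ≤ μ (⋃ s : Fin (t + 1), {ω | x < A t ω - A (s : ℕ) ω - S (s : ℕ) t ω}) :=
        measure_mono hsub
    _ ≤ ∑ s : Fin (t + 1), μ {ω | x < A t ω - A (s : ℕ) ω - S (s : ℕ) t ω} :=
        measure_iUnion_fintype_le μ _
    _ ≤ ∑ s : Fin (t + 1), ENNReal.ofReal (g (t - (s : ℕ)) * Real.exp (-θ * x)) :=
        Finset.sum_le_sum fun s _ => key s
    _ = ENNReal.ofReal (∑ s : Fin (t + 1), g (t - (s : ℕ)) * Real.exp (-θ * x)) := by
        rw [ENNReal.ofReal_sum_of_nonneg]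
        intro i _
        positivity
    _ = ENNReal.ofReal ((∑ u ∈ Finset.range (t + 1), g u) * Real.exp (-θ * x)) := by
        congr 1
        rw [← Finset.sum_mul]
        congr 1
        rw [Fin.sum_univ_eq_sum_range (fun s => g (t - s)) (t + 1)]
        have := Finset.sum_range_reflect g (t + 1)
        simpa using this
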